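/- (Proposition 8) Let x_m be the BayesCG posterior mean computed with the search directions of Proposition 7 (assuming s̃_j ≠ 0 for j ≤ m), and let x* = A⁻¹ b. Then x_m minimises ‖x − x*‖_{Σ₀⁻¹} over the shifted Krylov subspace x₀ + K_{m−1}(Σ₀ Aᵀ A, Σ₀ Aᵀ r₀): for every x in this subspace, ‖x_m − x*‖_{Σ₀⁻¹} ≤ ‖x − x*‖_{Σ₀⁻¹}. -/

import Mathlib

open Matrix

/-- The `M`-norm `‖v‖_M = √(vᵀ M v)` associated with a symmetric positive definite matrix. -/
noncomputable def matNorm {d : ℕ} (M : Matrix (Fin d) (Fin d) ℝ) (v : Fin d → ℝ) : ℝ :=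
  Real.sqrt (v ⬝ᵥ (M *ᵥ v))

lemma dot_mulVec_symm {d : ℕ} {M : Matrix (Fin d) (Fin d) ℝ} (hM : Mᵀ = M)
    (u v : Fin d → ℝ) : u ⬝ᵥ (M *ᵥ v) = v ⬝ᵥ (M *ᵥ u) := by
  rw [dotProduct_mulVec, ← mulVec_transpose, hM, dotProduct_comm]

lemma dot_self_pos {d : ℕ} {v : Fin d → ℝ} (hv : v ≠ 0) : 0 < v ⬝ᵥ v := by
  rcases lt_or_eq_of_le (by simpa using dotProduct_star_self_nonneg v : (0:ℝ) ≤ v ⬝ᵥ v) with h | h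
  · exact h
  · exact absurd (dotProduct_self_eq_zero.mp h.symm) hv

/-- **Proposition 8.** The BayesCG posterior mean `x_m`, computed with the
search directions of Proposition 7, minimises `‖x − x*‖_{Σ₀⁻¹}` over the shifted Krylov
subspace `x₀ + K_{m−1}(Σ₀ Aᵀ A, Σ₀ Aᵀ r₀)`, where `x* = A⁻¹ b`. -/
theorem bayescg_mean_minimises_over_krylov
    (d m : ℕ) (hm : m ≤ d)
    (A : Matrix (Fin d) (Fin d) ℝ) (hA : IsUnit A)
    (b : Fin d → ℝ) (xstar : Fin d → ℝ) (hxstar : xstar = A⁻¹ *ᵥ b)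
    (Sigma0 : Matrix (Fin d) (Fin d) ℝ) (hSigma0 : Sigma0.PosDef)
    (x0 : Fin d → ℝ)
    (x s st r : ℕ → Fin d → ℝ)
    (hx0 : x 0 = x0)
    (hr : ∀ j, j ≤ m → r j = b - A *ᵥ x j)
    (hst1 : st 1 = r 0)
    (hstj : ∀ j, 2 ≤ j → j ≤ m →
      st j = r (j - 1) - (s (j - 1) ⬝ᵥ ((A * Sigma0 * Aᵀ) *ᵥ r (j - 1))) • s (j - 1))
    (hs : ∀ j, 1 ≤ j → j ≤ m →
      s j = (Real.sqrt (st j ⬝ᵥ ((A * Sigma0 * Aᵀ) *ᵥ st j)))⁻¹ • st j)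
    (hx : ∀ j, 1 ≤ j → j ≤ m →
      x j = x (j - 1) + (s j ⬝ᵥ r (j - 1)) • ((Sigma0 * Aᵀ) *ᵥ s j))
    (hnz : ∀ j, 1 ≤ j → j ≤ m → st j ≠ 0) :
    ∀ v ∈ Submodule.span ℝ
      (Set.range fun i : Fin m =>
        ((Sigma0 * Aᵀ * A) ^ (i : ℕ)) *ᵥ ((Sigma0 * Aᵀ) *ᵥ (b - A *ᵥ x0))),
      matNorm Sigma0⁻¹ (x m - xstar) ≤ matNorm Sigma0⁻¹ ((x0 + v) - xstar) := by
  set N := A * Sigma0 * Aᵀ with hN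
  -- basic facts
  have hAdet : IsUnit A.det := (isUnit_iff_isUnit_det A).mp hA
  have hATdet : IsUnit Aᵀ.det := by rwa [det_transpose]
  have hSdet : IsUnit Sigma0.det := (isUnit_iff_isUnit_det Sigma0).mp hSigma0.isUnit
  have hS0sym : Sigma0ᵀ = Sigma0 := by
    have := hSigma0.isHermitian
    rwa [IsHermitian, conjTranspose_eq_transpose_of_trivial] at this
  have hNsym : Nᵀ = N := by
    rw [hN, transpose_mul, transpose_mul, transpose_transpose, hS0sym, Matrix.mul_assoc]
  have hSinv : (Sigma0⁻¹).PosDef := hSigma0.inv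
  have hSinvT : (Sigma0⁻¹)ᵀ = Sigma0⁻¹ := by
    have := hSinv.isHermitian
    rwa [IsHermitian, conjTranspose_eq_transpose_of_trivial] at this
  have hNpos : ∀ u : Fin d → ℝ, u ≠ 0 → 0 < u ⬝ᵥ (N *ᵥ u) := by
    intro u hu
    have h1 : Aᵀ *ᵥ u ≠ 0 := by
      intro h
      apply hu
      have := congrArg (fun w => (Aᵀ)⁻¹ *ᵥ w) h
      simpa [mulVec_mulVec, nonsing_inv_mul _ hATdet] using this
    have h2 := hSigma0.dotProduct_mulVec_pos h1
    simp only [star_trivial] at h2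
    have h3 : u ⬝ᵥ (N *ᵥ u) = (Aᵀ *ᵥ u) ⬝ᵥ (Sigma0 *ᵥ (Aᵀ *ᵥ u)) := by
      rw [hN, ← mulVec_mulVec, ← mulVec_mulVec, dotProduct_mulVec, ← mulVec_transpose]
    rw [h3]; exact h2
  -- normalization
  have hQpos : ∀ j, 1 ≤ j → j ≤ m → 0 < Real.sqrt (st j ⬝ᵥ (N *ᵥ st j)) := fun j h1 h2 =>
    Real.sqrt_pos.mpr (hNpos (st j) (hnz j h1 h2))
  have hstq : ∀ j, 1 ≤ j → j ≤ m → st j = Real.sqrt (st j ⬝ᵥ (N *ᵥ st j)) • s j := by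
    intro j h1 h2
    rw [hs j h1 h2, smul_smul, mul_inv_cancel₀ (hQpos j h1 h2).ne', one_smul]
  have hsnorm : ∀ j, 1 ≤ j → j ≤ m → s j ⬝ᵥ (N *ᵥ s j) = 1 := by
    intro j h1 h2
    rw [hs j h1 h2, smul_dotProduct, mulVec_smul, dotProduct_smul, smul_eq_mul, smul_eq_mul]
    rw [← Real.mul_self_sqrt (le_of_lt (hNpos (st j) (hnz j h1 h2)))]
    field_simp
    rw [Real.sqrt_sq (hQpos j h1 h2).le]
    exact div_self (pow_pos (hQpos j h1 h2) 2).ne'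
  -- residual recurrence
  have hrrec : ∀ j, j + 1 ≤ m → r (j+1) = r j - (s (j+1) ⬝ᵥ r j) • (N *ᵥ s (j+1)) := by
    intro j hj
    have h1 := hx (j+1) (by omega) hj
    simp only [Nat.add_sub_cancel] at h1
    rw [hr (j+1) hj, h1, mulVec_add, mulVec_smul, mulVec_mulVec, hr j (by omega)]
    rw [show A * (Sigma0 * Aᵀ) = N by rw [hN, Matrix.mul_assoc]]
    abel
  have hst2 : ∀ j, 1 ≤ j → j + 1 ≤ m → st (j+1) = r j - (s j ⬝ᵥ (N *ᵥ r j)) • s j := by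
    intro j h1 hj
    have := hstj (j+1) (by omega) hj
    simpa [Nat.add_sub_cancel] using this
  -- trivial case m = 0
  by_cases hm0 : m = 0
  · subst hm0
    intro v hv
    have : v = 0 := by
      simpa [Submodule.span_empty, Set.range_eq_empty] using hv
    subst this
    simp [hx0]
  have hm1 : 1 ≤ m := by omega
  have hr0' : r 0 = b - A *ᵥ x0 := by rw [hr 0 (by omega), hx0]
  have hr0s : r 0 = Real.sqrt (st 1 ⬝ᵥ (N *ᵥ st 1)) • s 1 := by
    rw [← hst1]; exact hstq 1 le_rfl hm1
  have hris : ∀ t, 1 ≤ t → t + 1 ≤ m →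
      r t = (s t ⬝ᵥ (N *ᵥ r t)) • s t + Real.sqrt (st (t+1) ⬝ᵥ (N *ᵥ st (t+1))) • s (t+1) := by
    intro t h1 h2
    have h := hst2 t h1 h2
    rw [hstq (t+1) (by omega) h2] at h
    rw [h]; abel
  have hrnz : ∀ t, t < m → r t ≠ 0 := by
    intro t ht
    cases t with
    | zero =>
      rw [← hst1]; exact hnz 1 le_rfl hm1
    | succ t =>
      intro h0
      apply hnz (t+2) (by omega) (by omega)
      rw [hst2 (t+1) (by omega) (by omega), h0]
      simp
  have halphaAux : ∀ k, k + 1 ≤ m → (1 ≤ k → r k ⬝ᵥ s k = 0) → 0 < s (k+1) ⬝ᵥ r k := by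
    intro k hk hp
    have hstr : st (k+1) ⬝ᵥ r k = r k ⬝ᵥ r k := by
      cases k with
      | zero => rw [hst1]
      | succ kk =>
        rw [hst2 (kk+1) (by omega) hk, sub_dotProduct, smul_dotProduct, smul_eq_mul,
          dotProduct_comm (s (kk+1)) (r (kk+1)), hp (by omega)]
        simp
    rw [hs (k+1) (by omega) hk, smul_dotProduct, smul_eq_mul, hstr]
    exact mul_pos (inv_pos.mpr (hQpos (k+1) (by omega) hk)) (dot_self_pos (hrnz k (by omega)))
  -- main joint induction: conjugacy and residual orthogonality
  have main : ∀ j, j ≤ m →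
      (∀ k, 1 ≤ k → k < j → s j ⬝ᵥ (N *ᵥ s k) = 0) ∧
      (∀ k, 1 ≤ k → k ≤ j → r j ⬝ᵥ s k = 0) := by
    intro j
    induction j using Nat.strong_induction_on with
    | _ j IH =>
      intro hjm
      have hplain : ∀ t, t < j → ∀ k, 1 ≤ k → k ≤ t → r t ⬝ᵥ s k = 0 :=
        fun t ht => (IH t ht (le_trans (le_of_lt ht) hjm)).2
      have halpha : ∀ k, k < j → 0 < s (k+1) ⬝ᵥ r k := by
        intro k hk
        exact halphaAux k (by omega) (fun h1 => hplain k hk k h1 le_rfl)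
      have hconj : ∀ k, 1 ≤ k → k < j → s j ⬝ᵥ (N *ᵥ s k) = 0 := by
        intro k hk1 hkj
        obtain ⟨jj, rfl⟩ : ∃ jj, j = jj + 1 := ⟨j - 1, by omega⟩
        have hjj1 : 1 ≤ jj := by omega
        -- orthogonality of r jj to earlier residuals
        have hrr : ∀ i, i + 1 ≤ jj → r jj ⬝ᵥ r i = 0 := by
          intro i hi
          cases i with
          | zero =>
            rw [hr0s, dotProduct_smul, hplain jj (by omega) 1 le_rfl hjj1, smul_zero]
          | succ t =>
            rw [hris (t+1) (by omega) (by omega), dotProduct_add, dotProduct_smul,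
              dotProduct_smul, hplain jj (by omega) (t+1) (by omega) (by omega),
              hplain jj (by omega) (t+2) (by omega) (by omega)]
            simp
        have hzero : st (jj+1) ⬝ᵥ (N *ᵥ s k) = 0 := by
          rw [hst2 jj hjj1 hjm, sub_dotProduct, smul_dotProduct, smul_eq_mul]
          rcases eq_or_lt_of_le (Nat.lt_succ_iff.mp hkj) with heq | hlt
          · subst heq
            rw [hsnorm k hk1 (by omega), mul_one, dot_mulVec_symm hNsym (r k) (s k)]
            simp
          · have h2 : s jj ⬝ᵥ (N *ᵥ s k) = 0 := (IH jj (by omega) (by omega)).1 k hk1 hlt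
            have h1 : r jj ⬝ᵥ (N *ᵥ s k) = 0 := by
              obtain ⟨kk, rfl⟩ : ∃ kk, k = kk + 1 := ⟨k - 1, by omega⟩
              have hrec := hrrec kk (by omega)
              have hsmul : (s (kk+1) ⬝ᵥ r kk) • (N *ᵥ s (kk+1)) = r kk - r (kk+1) := by
                rw [hrec]; abel
              have hdot : r jj ⬝ᵥ ((s (kk+1) ⬝ᵥ r kk) • (N *ᵥ s (kk+1))) = 0 := by
                rw [hsmul, dotProduct_sub, hrr kk (by omega), hrr (kk+1) (by omega), sub_zero]
              rw [dotProduct_smul, smul_eq_mul] at hdot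
              exact (mul_eq_zero.mp hdot).resolve_left (halpha kk (by omega)).ne'
            rw [h1, h2]
            simp
        rw [hs (jj+1) (by omega) hjm, smul_dotProduct, smul_eq_mul, hzero, mul_zero]
      have hpl : ∀ k, 1 ≤ k → k ≤ j → r j ⬝ᵥ s k = 0 := by
        intro k hk1 hkj
        obtain ⟨jj, rfl⟩ : ∃ jj, j = jj + 1 := ⟨j - 1, by omega⟩
        rw [hrrec jj (by omega), sub_dotProduct, smul_dotProduct, smul_eq_mul]
        rcases eq_or_lt_of_le hkj with heq | hlt
        · subst heq
          rw [dotProduct_comm (N *ᵥ s (jj+1)) (s (jj+1)), hsnorm (jj+1) (by omega) hjm,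
            mul_one, dotProduct_comm (r jj) (s (jj+1))]
          simp
        · have hk' : k ≤ jj := by omega
          rw [hplain jj (by omega) k hk1 hk']
          have h0 : (N *ᵥ s (jj+1)) ⬝ᵥ s k = 0 := by
            rw [dotProduct_comm, dot_mulVec_symm hNsym]
            exact hconj k hk1 (by omega)
          rw [h0]
          simp
      exact ⟨hconj, hpl⟩
  have horthS : ∀ k, 1 ≤ k → k ≤ m → r m ⬝ᵥ s k = 0 := (main m le_rfl).2
  have halphaG : ∀ k, k + 1 ≤ m → s (k+1) ⬝ᵥ r k ≠ 0 := fun k hk =>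
    (halphaAux k hk (fun h1 => (main k (by omega)).2 k h1 le_rfl)).ne'
  have hNs : ∀ k, k + 1 ≤ m →
      N *ᵥ s (k+1) = (s (k+1) ⬝ᵥ r k)⁻¹ • (r k - r (k+1)) := by
    intro k hk
    have h : (s (k+1) ⬝ᵥ r k) • (N *ᵥ s (k+1)) = r k - r (k+1) := by
      rw [hrrec k hk]; abel
    rw [← h, smul_smul, inv_mul_cancel₀ (halphaG k hk), one_smul]
  -- graded Krylov spaces spanned by search directions
  set S : ℕ → Submodule ℝ (Fin d → ℝ) :=
    fun n => Submodule.span ℝ (s '' Set.Icc 1 n) with hSdef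
  have hSmono : ∀ {a c : ℕ}, a ≤ c → S a ≤ S c := fun h =>
    Submodule.span_mono (Set.image_mono (Set.Icc_subset_Icc_right h))
  have hsmem : ∀ k n, 1 ≤ k → k ≤ n → s k ∈ S n := fun k n h1 h2 =>
    Submodule.subset_span ⟨k, ⟨h1, h2⟩, rfl⟩
  have hrS : ∀ t, t + 1 ≤ m → r t ∈ S (t+1) := by
    intro t ht
    cases t with
    | zero =>
      rw [hr0s]
      exact Submodule.smul_mem _ _ (hsmem 1 1 le_rfl le_rfl)
    | succ t =>
      rw [hris (t+1) (by omega) ht]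
      exact add_mem (Submodule.smul_mem _ _ (hsmem (t+1) (t+2) (by omega) (by omega)))
        (Submodule.smul_mem _ _ (hsmem (t+2) (t+2) (by omega) le_rfl))
  have hmem : ∀ i, i + 1 ≤ m → (N ^ i) *ᵥ r 0 ∈ S (i+1) := by
    intro i
    induction i with
    | zero =>
      intro h
      simpa using hrS 0 h
    | succ i ih =>
      intro h
      have h1 := ih (by omega)
      have h2 : (N ^ (i+1)) *ᵥ r 0 = N *ᵥ ((N ^ i) *ᵥ r 0) := by
        rw [mulVec_mulVec, ← pow_succ']
      rw [h2]
      refine Submodule.span_induction (p := fun u _ => N *ᵥ u ∈ S (i+2)) ?_ ?_ ?_ ?_ h1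
      · rintro u ⟨k, ⟨hk1, hk2⟩, rfl⟩
        obtain ⟨kk, rfl⟩ : ∃ kk, k = kk + 1 := ⟨k - 1, by omega⟩
        rw [hNs kk (by omega)]
        exact Submodule.smul_mem _ _ (sub_mem
          (hSmono (by omega) (hrS kk (by omega)))
          (hSmono (by omega) (hrS (kk+1) (by omega))))
      · simp
      · intro u v _ _ hu hv
        rw [mulVec_add]; exact add_mem hu hv
      · intro c u _ hu
        rw [mulVec_smul]; exact Submodule.smul_mem _ _ hu
  have hrmdot : ∀ u ∈ S m, r m ⬝ᵥ u = 0 := by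
    intro u hu
    refine Submodule.span_induction (p := fun u _ => r m ⬝ᵥ u = 0) ?_ ?_ ?_ ?_ hu
    · rintro u ⟨k, ⟨hk1, hk2⟩, rfl⟩
      exact horthS k hk1 hk2
    · simp
    · intro a c _ _ ha hc
      rw [dotProduct_add, ha, hc, add_zero]
    · intro a u _ hu
      rw [dotProduct_smul, hu, smul_zero]
  have hkry : ∀ i, i < m → r m ⬝ᵥ ((N ^ i) *ᵥ r 0) = 0 := fun i hi =>
    hrmdot _ (hSmono (by omega) (hmem i hi))
  -- the error vector is orthogonal (in Σ₀⁻¹) to the Krylov space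
  have he : A *ᵥ (x m - xstar) = -(r m) := by
    rw [mulVec_sub, hxstar, mulVec_mulVec, mul_nonsing_inv A hAdet, one_mulVec,
      hr m le_rfl, neg_sub]
  have hinner : ∀ u, (x m - xstar) ⬝ᵥ (Sigma0⁻¹ *ᵥ ((Sigma0 * Aᵀ) *ᵥ u)) = -(r m ⬝ᵥ u) := by
    intro u
    rw [mulVec_mulVec, ← Matrix.mul_assoc, nonsing_inv_mul Sigma0 hSdet, Matrix.one_mul,
      dotProduct_mulVec, vecMul_transpose, he, neg_dotProduct]
  have hEt : ∀ k, 1 ≤ k → k ≤ m →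
      (x m - xstar) ⬝ᵥ (Sigma0⁻¹ *ᵥ ((Sigma0 * Aᵀ) *ᵥ s k)) = 0 := by
    intro k h1 h2
    rw [hinner, horthS k h1 h2, neg_zero]
  have htele : ∀ j, j ≤ m → (x m - xstar) ⬝ᵥ (Sigma0⁻¹ *ᵥ (x j - x0)) = 0 := by
    intro j
    induction j with
    | zero =>
      intro _
      rw [hx0, sub_self, mulVec_zero, dotProduct_zero]
    | succ j ih =>
      intro h
      have hxj := hx (j+1) (by omega) h
      simp only [Nat.add_sub_cancel] at hxj
      rw [hxj, show x j + (s (j+1) ⬝ᵥ r j) • ((Sigma0 * Aᵀ) *ᵥ s (j+1)) - x0 =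
        (x j - x0) + (s (j+1) ⬝ᵥ r j) • ((Sigma0 * Aᵀ) *ᵥ s (j+1)) from by abel,
        mulVec_add, dotProduct_add, ih (by omega), mulVec_smul, dotProduct_smul,
        hEt (j+1) (by omega) h, smul_zero, add_zero]
  have hcommpow : ∀ i : ℕ,
      (Sigma0 * Aᵀ * A) ^ i * (Sigma0 * Aᵀ) = (Sigma0 * Aᵀ) * N ^ i := by
    intro i
    induction i with
    | zero => simp
    | succ i ih =>
      have hXY : (Sigma0 * Aᵀ * A) * (Sigma0 * Aᵀ) = (Sigma0 * Aᵀ) * N := by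
        rw [hN]; simp only [Matrix.mul_assoc]
      rw [pow_succ, Matrix.mul_assoc, hXY, ← Matrix.mul_assoc, ih, Matrix.mul_assoc, ← pow_succ]
  have hEg : ∀ u ∈ Submodule.span ℝ
      (Set.range fun i : Fin m =>
        ((Sigma0 * Aᵀ * A) ^ (i : ℕ)) *ᵥ ((Sigma0 * Aᵀ) *ᵥ (b - A *ᵥ x0))),
      (x m - xstar) ⬝ᵥ (Sigma0⁻¹ *ᵥ u) = 0 := by
    intro u hu
    refine Submodule.span_induction (p := fun u _ => (x m - xstar) ⬝ᵥ (Sigma0⁻¹ *ᵥ u) = 0)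
      ?_ ?_ ?_ ?_ hu
    · rintro u ⟨i, rfl⟩
      show (x m - xstar) ⬝ᵥ (Sigma0⁻¹ *ᵥ
        (((Sigma0 * Aᵀ * A) ^ (i : ℕ)) *ᵥ ((Sigma0 * Aᵀ) *ᵥ (b - A *ᵥ x0)))) = 0
      have hgen : ((Sigma0 * Aᵀ * A) ^ (i : ℕ)) *ᵥ ((Sigma0 * Aᵀ) *ᵥ (b - A *ᵥ x0)) =
          (Sigma0 * Aᵀ) *ᵥ ((N ^ (i : ℕ)) *ᵥ r 0) := by
        rw [← hr0', mulVec_mulVec, hcommpow, ← mulVec_mulVec]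
      rw [hgen, hinner, hkry (i : ℕ) i.isLt, neg_zero]
    · simp
    · intro a c _ _ ha hc
      rw [mulVec_add, dotProduct_add, ha, hc, add_zero]
    · intro a u _ hu
      rw [mulVec_smul, dotProduct_smul, hu, smul_zero]
  -- conclude via Pythagoras
  intro v hv
  have hEv := hEg v hv
  have hw : (x m - xstar) ⬝ᵥ (Sigma0⁻¹ *ᵥ (x0 + v - x m)) = 0 := by
    rw [show x0 + v - x m = v - (x m - x0) from by abel, mulVec_sub, dotProduct_sub,
      hEv, htele m le_rfl, sub_zero]
  have hw' : (x0 + v - x m) ⬝ᵥ (Sigma0⁻¹ *ᵥ (x m - xstar)) = 0 := by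
    rw [dot_mulVec_symm hSinvT]; exact hw
  have hpos : 0 ≤ (x0 + v - x m) ⬝ᵥ (Sigma0⁻¹ *ᵥ (x0 + v - x m)) := by
    have := hSinv.posSemidef.dotProduct_mulVec_nonneg (x0 + v - x m)
    simpa using this
  simp only [matNorm]
  apply Real.sqrt_le_sqrt
  rw [show x0 + v - xstar = (x m - xstar) + (x0 + v - x m) from by abel]
  simp only [mulVec_add, dotProduct_add, add_dotProduct]
  rw [hw, hw']
  linarith
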